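/- Case s = 2, q = 2 of the new generalization: for an n×n matrix M with leading principal block D of order t = n−4, det(M)/det(D) = det(B_1)/det(B_0), equivalently det(M)·det(B_0) = det(D)·det(B_1), where B_0 and B_1 are 2×2 matrices of bordered minors of orders t+1 and t+3 respectively. -/

import Mathlib

open Matrix

/-- Sylvester's determinant identity, case `q = 2`. -/
theorem sylv2 {K : Type*} [Field K] {m : ℕ}
    (N : Matrix (Fin (m + 2)) (Fin (m + 2)) K) :
    (Matrix.of (fun i j : Fin 2 =>
      (N.submatrix
        (Fin.snoc (Fin.castLE (by omega : m ≤ m + 2))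
          (⟨m + (i : ℕ), by have := i.isLt; omega⟩ : Fin (m + 2)))
        (Fin.snoc (Fin.castLE (by omega : m ≤ m + 2))
          (⟨m + (j : ℕ), by have := j.isLt; omega⟩ : Fin (m + 2)))).det)).det
    = (N.submatrix (Fin.castLE (by omega : m ≤ m + 2))
        (Fin.castLE (by omega : m ≤ m + 2))).det * N.det := by
  have hsl : ∀ (f : Fin m → Fin (m + 2)) (x : Fin (m + 2)) (a : Fin m),
      (Fin.snoc f x : Fin (m+1) → Fin (m + 2)) (Fin.castAdd 1 a) = f a := by
    intro f x a
    rw [show (Fin.castAdd 1 a : Fin (m + 1)) = a.castSucc from rfl]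
    simp
  have hsr : ∀ (f : Fin m → Fin (m + 2)) (x : Fin (m + 2)) (b : Fin 1),
      (Fin.snoc f x : Fin (m+1) → Fin (m + 2)) (Fin.natAdd m b) = x := by
    intro f x b
    have hb0 : b = 0 := Subsingleton.elim _ _
    subst hb0
    have hb : Fin.natAdd m (0 : Fin 1) = Fin.last m := by ext; simp
    rw [hb, Fin.snoc_last]
  set P : Matrix (Fin m) (Fin m) K :=
    N.submatrix (Fin.castLE (by omega : m ≤ m + 2)) (Fin.castLE (by omega)) with hPdef
  set Q : Fin 2 → Fin 2 → Matrix (Fin (m + 1)) (Fin (m + 1)) K := fun i j =>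
    N.submatrix
      (Fin.snoc (Fin.castLE (by omega : m ≤ m + 2))
        (⟨m + (i : ℕ), by have := i.isLt; omega⟩ : Fin (m + 2)))
      (Fin.snoc (Fin.castLE (by omega : m ≤ m + 2))
        (⟨m + (j : ℕ), by have := j.isLt; omega⟩ : Fin (m + 2))) with hQdef
  show (Matrix.of (fun i j : Fin 2 => (Q i j).det)).det = P.det * N.det
  by_cases hP : P.det = 0
  · -- singular pivot
    obtain ⟨v, hv, hv0⟩ := Matrix.exists_mulVec_eq_zero_iff.2 hP
    obtain ⟨k, hk⟩ := Function.ne_iff.1 hv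
    replace hk : v k ≠ 0 := by simpa using hk
    set s : Fin 2 → K := fun i =>
      ∑ b : Fin m, N (⟨m + (i : ℕ), by have := i.isLt; omega⟩ : Fin (m + 2))
        (Fin.castLE (by omega) b) * v b with hsdef
    set d : Fin 2 → K := fun j =>
      ((Q 0 j).updateRow (Fin.last m) (Pi.single (Fin.castSucc k) 1)).det with hddef
    have key : ∀ i j : Fin 2, (Q i j).det * v k = s i * d j := by
      intro i j
      have hQv : (Q i j) *ᵥ (Fin.snoc v 0) = Pi.single (Fin.last m) (s i) := by
        funext a
        induction a using Fin.lastCases with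
        | last =>
          simp only [mulVec, dotProduct, Fin.sum_univ_castSucc, Fin.snoc_castSucc,
            Fin.snoc_last, mul_zero, add_zero, Pi.single_eq_same, hQdef,
            Matrix.submatrix_apply]
          rfl
        | cast a =>
          have hne : (Fin.castSucc a) ≠ Fin.last m := (Fin.castSucc_lt_last a).ne
          rw [Pi.single_eq_of_ne hne]
          have := congrFun hv0 a
          simp only [mulVec, dotProduct, Pi.zero_apply] at this ⊢
          rw [Fin.sum_univ_castSucc]
          simp only [Fin.snoc_castSucc, Fin.snoc_last, mul_zero, add_zero, hQdef,
            Matrix.submatrix_apply]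
          convert this using 1
          rfl
      have h2 : (Q i j).det • (Fin.snoc v 0 : Fin (m + 1) → K)
          = fun a => (Q i j).adjugate a (Fin.last m) * s i := by
        calc (Q i j).det • (Fin.snoc v 0 : Fin (m + 1) → K)
            = ((Q i j).det • (1 : Matrix (Fin (m+1)) (Fin (m+1)) K)) *ᵥ (Fin.snoc v 0) := by
              rw [Matrix.smul_mulVec, Matrix.one_mulVec]
          _ = ((Q i j).adjugate * (Q i j)) *ᵥ (Fin.snoc v 0) := by rw [Matrix.adjugate_mul]
          _ = (Q i j).adjugate *ᵥ ((Q i j) *ᵥ (Fin.snoc v 0)) := by rw [Matrix.mulVec_mulVec]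
          _ = (Q i j).adjugate *ᵥ (Pi.single (Fin.last m) (s i)) := by rw [hQv]
          _ = fun a => (Q i j).adjugate a (Fin.last m) * s i := Matrix.mulVec_single _ _ _
      have h3 := congrFun h2 (Fin.castSucc k)
      simp only [Pi.smul_apply, Fin.snoc_castSucc, smul_eq_mul] at h3
      rw [h3, Matrix.adjugate_apply]
      have hrow : (Q i j).updateRow (Fin.last m) (Pi.single (Fin.castSucc k) 1)
          = (Q 0 j).updateRow (Fin.last m) (Pi.single (Fin.castSucc k) 1) := by
        ext a b
        induction a using Fin.lastCases with
        | last => simp [Matrix.updateRow_self]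
        | cast a =>
          have hne : (Fin.castSucc a) ≠ Fin.last m := (Fin.castSucc_lt_last a).ne
          simp [Matrix.updateRow_ne hne, hQdef, Fin.snoc_castSucc]
      rw [hrow]
      simp only [hsdef, hddef]
      ring
    have hB : (Matrix.of (fun i j : Fin 2 => (Q i j).det)).det = 0 := by
      have hvk2 : v k * v k ≠ 0 := mul_ne_zero hk hk
      have hz : (Matrix.of (fun i j : Fin 2 => (Q i j).det)).det * (v k * v k) = 0 := by
        have e00 := key 0 0
        have e01 := key 0 1
        have e10 := key 1 0
        have e11 := key 1 1
        rw [Matrix.det_fin_two]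
        simp only [Matrix.of_apply]
        linear_combination ((Q 1 1).det * v k) * e00 + (s 0 * d 0) * e11
          - ((Q 1 0).det * v k) * e01 - (s 0 * d 1) * e10
      exact (mul_eq_zero.1 hz).resolve_right hvk2
    rw [hB, hP, zero_mul]
  · -- invertible pivot
    have : Invertible P := P.invertibleOfIsUnitDet (isUnit_iff_ne_zero.2 hP)
    set X : Matrix (Fin m) (Fin 2) K :=
      N.submatrix (Fin.castLE (by omega))
        (fun j : Fin 2 => (⟨m + (j : ℕ), by have := j.isLt; omega⟩ : Fin (m + 2))) with hXdef
    set Y : Matrix (Fin 2) (Fin m) K :=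
      N.submatrix (fun i : Fin 2 => (⟨m + (i : ℕ), by have := i.isLt; omega⟩ : Fin (m + 2)))
        (Fin.castLE (by omega)) with hYdef
    set E : Matrix (Fin 2) (Fin 2) K :=
      N.submatrix (fun i : Fin 2 => (⟨m + (i : ℕ), by have := i.isLt; omega⟩ : Fin (m + 2)))
        (fun j : Fin 2 => (⟨m + (j : ℕ), by have := j.isLt; omega⟩ : Fin (m + 2))) with hEdef
    set S : Matrix (Fin 2) (Fin 2) K := E - Y * ⅟P * X with hSdef
    have hN : N.det = P.det * S.det := by
      rw [← Matrix.det_submatrix_equiv_self (finSumFinEquiv : Fin m ⊕ Fin 2 ≃ Fin (m + 2)) N]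
      have hb : N.submatrix finSumFinEquiv finSumFinEquiv = Matrix.fromBlocks P X Y E := by
        ext (a | a) (b | b) <;> rfl
      rw [hb, Matrix.det_fromBlocks₁₁]
    have hentry : ∀ i j : Fin 2, (Q i j).det = P.det * S i j := by
      intro i j
      rw [← Matrix.det_submatrix_equiv_self (finSumFinEquiv : Fin m ⊕ Fin 1 ≃ Fin (m + 1)) (Q i j)]
      have hblk : (Q i j).submatrix finSumFinEquiv finSumFinEquiv
          = Matrix.fromBlocks P (Matrix.of fun a (_ : Fin 1) => X a j)
              (Matrix.of fun (_ : Fin 1) b => Y i b)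
              (Matrix.of fun (_ : Fin 1) (_ : Fin 1) => E i j) := by
        ext (a | a) (b | b) <;>
          simp [hQdef, hPdef, hXdef, hYdef, hEdef, finSumFinEquiv_apply_left,
            finSumFinEquiv_apply_right, hsl, hsr]
      rw [hblk, Matrix.det_fromBlocks₁₁, Matrix.det_fin_one]
      congr 1
    have hBS : (Matrix.of (fun i j : Fin 2 => (Q i j).det)) = P.det • S := by
      ext i j
      simp [hentry]
    rw [hBS, Matrix.det_smul, hN]
    simp only [Fintype.card_fin]
    ring



/-- Case `s = 2`, `q = 2` of the new generalization: for an `(t+4)×(t+4)`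
matrix `M` with leading principal block `D` of order `t`,
`det M · det B₀ = det D · det B₁`. -/
theorem new_sylvester_s2q2 {K : Type*} [Field K] {t : ℕ} (ht : 0 < t)
    (M : Matrix (Fin (t + 4)) (Fin (t + 4)) K) :
    M.det *
      (Matrix.of (fun i j : Fin 2 =>
        (M.submatrix
          (Fin.snoc (Fin.castLE (by omega : t ≤ t + 4))
            (⟨t + (i : ℕ), by have := i.isLt; omega⟩ : Fin (t + 4)))
          (Fin.snoc (Fin.castLE (by omega : t ≤ t + 4))
            (⟨t + (j : ℕ), by have := j.isLt; omega⟩ : Fin (t + 4)))).det)).det =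
    (M.submatrix (Fin.castLE (by omega : t ≤ t + 4))
        (Fin.castLE (by omega : t ≤ t + 4))).det *
      (Matrix.of (fun i j : Fin 2 =>
        (M.submatrix
          (Fin.snoc (Fin.castLE (by omega : t + 2 ≤ t + 4))
            (⟨t + 2 + (i : ℕ), by have := i.isLt; omega⟩ : Fin (t + 4)))
          (Fin.snoc (Fin.castLE (by omega : t + 2 ≤ t + 4))
            (⟨t + 2 + (j : ℕ), by have := j.isLt; omega⟩ : Fin (t + 4)))).det)).det := by
  set C : Matrix (Fin (t + 2)) (Fin (t + 2)) K :=
    M.submatrix (Fin.castLE (by omega : t + 2 ≤ t + 4))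
      (Fin.castLE (by omega : t + 2 ≤ t + 4)) with hC
  have h1 : (Matrix.of (fun i j : Fin 2 =>
        (M.submatrix
          (Fin.snoc (Fin.castLE (by omega : t + 2 ≤ t + 4))
            (⟨t + 2 + (i : ℕ), by have := i.isLt; omega⟩ : Fin (t + 4)))
          (Fin.snoc (Fin.castLE (by omega : t + 2 ≤ t + 4))
            (⟨t + 2 + (j : ℕ), by have := j.isLt; omega⟩ : Fin (t + 4)))).det)).det
      = C.det * M.det := sylv2 (m := t + 2) M
  have h2 := sylv2 (m := t) C
  have hQ : ∀ i j : Fin 2,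
      C.submatrix
        (Fin.snoc (Fin.castLE (by omega : t ≤ t + 2))
          (⟨t + (i : ℕ), by have := i.isLt; omega⟩ : Fin (t + 2)))
        (Fin.snoc (Fin.castLE (by omega : t ≤ t + 2))
          (⟨t + (j : ℕ), by have := j.isLt; omega⟩ : Fin (t + 2)))
      = M.submatrix
        (Fin.snoc (Fin.castLE (by omega : t ≤ t + 4))
          (⟨t + (i : ℕ), by have := i.isLt; omega⟩ : Fin (t + 4)))
        (Fin.snoc (Fin.castLE (by omega : t ≤ t + 4))
          (⟨t + (j : ℕ), by have := j.isLt; omega⟩ : Fin (t + 4))) := by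
    intro i j
    ext a b
    induction a using Fin.lastCases <;> induction b using Fin.lastCases <;>
      simp [hC, Fin.snoc_castSucc, Fin.snoc_last, Fin.castLE_castLE]
  have hD : C.submatrix (Fin.castLE (by omega : t ≤ t + 2))
        (Fin.castLE (by omega : t ≤ t + 2))
      = M.submatrix (Fin.castLE (by omega : t ≤ t + 4))
        (Fin.castLE (by omega : t ≤ t + 4)) := by
    ext a b
    simp [hC, Fin.castLE_castLE]
  rw [hD] at h2
  simp only [hQ] at h2
  rw [h2, h1]
  ring
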